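/- Let X, Z ∈ ℝ^{n×d} and Σ ∈ ℝ^{d×d} positive semidefinite with X = Z Σ^{1/2}, and set Σ̂ := (1/n) XᵀX. If d ≤ n, then for every i ∈ [d], |λ_i(Σ̂) − λ_i(Σ)| ≤ λ_i(Σ) · ‖(1/n) ZᵀZ − I_d‖₂. -/

import Mathlib

open Matrix

/-- The `i`-th largest eigenvalue (index `0` is the largest) of a Hermitian matrix. -/
noncomputable def eigDesc {K : Type*} [RCLike K] {m : ℕ} {A : Matrix (Fin m) (Fin m) K}
    (hA : A.IsHermitian) (i : Fin m) : ℝ :=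
  hA.eigenvalues (Tuple.sort hA.eigenvalues i.rev)

/-- The spectral norm (ℓ² operator norm) of a real square matrix. -/
noncomputable def specNorm {m : ℕ} (A : Matrix (Fin m) (Fin m) ℝ) : ℝ :=
  ‖Matrix.toEuclideanCLM (𝕜 := ℝ) A‖

lemma real_gram_isHermitian {n d : ℕ} (c : ℝ) (X : Matrix (Fin n) (Fin d) ℝ) :
    (c • (Xᵀ * X)).IsHermitian := by
  have h := Matrix.isHermitian_conjTranspose_mul_self X
  rw [Matrix.conjTranspose_eq_transpose_of_trivial] at h
  simp [Matrix.IsHermitian, Matrix.conjTranspose_smul, h.eq]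

open scoped ComplexOrder in
/-- The square root of a positive semidefinite matrix, as `Matrix.PosSemidef.sqrt` was defined
in the older Mathlib (since removed in favour of `CFC.sqrt`). -/
noncomputable def Matrix.PosSemidef.sqrt {n : Type*} [Fintype n] [DecidableEq n] {𝕜 : Type*} [RCLike 𝕜]
    {A : Matrix n n 𝕜} (hA : A.PosSemidef) : Matrix n n 𝕜 :=
  hA.1.eigenvectorUnitary.1 * diagonal ((↑) ∘ (√·) ∘ hA.1.eigenvalues) *
  (star hA.1.eigenvectorUnitary : Matrix n n 𝕜)

lemma psd_sqrt_isHermitian {d : ℕ} {S : Matrix (Fin d) (Fin d) ℝ} (hS : S.PosSemidef) :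
    hS.sqrt.IsHermitian := by
  unfold Matrix.PosSemidef.sqrt
  simp only [Matrix.IsHermitian, conjTranspose_mul, diagonal_conjTranspose, star_eq_conjTranspose,
    conjTranspose_conjTranspose, Matrix.mul_assoc, star_trivial]

lemma psd_sqrt_mul_self {d : ℕ} {S : Matrix (Fin d) (Fin d) ℝ} (hS : S.PosSemidef) :
    hS.sqrt * hS.sqrt = S := by
  conv_rhs => rw [hS.1.spectral_theorem]
  unfold Matrix.PosSemidef.sqrt
  rw [Unitary.conjStarAlgAut_apply]
  simp only [Matrix.mul_assoc]
  rw [← Matrix.mul_assoc (star _ : Matrix _ _ ℝ) _ _, Unitary.coe_star_mul_self, Matrix.one_mul,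
    ← Matrix.mul_assoc (diagonal _), diagonal_mul_diagonal]
  congr 3
  funext j
  simp [Real.mul_self_sqrt (hS.eigenvalues_nonneg j)]

open Finset Module Submodule

variable {d : ℕ} {A : Matrix (Fin d) (Fin d) ℝ}

noncomputable def quadF (A : Matrix (Fin d) (Fin d) ℝ) (v : EuclideanSpace ℝ (Fin d)) : ℝ :=
  inner ℝ (Matrix.toEuclideanCLM (𝕜 := ℝ) A v) v

noncomputable def eigBasisDesc (hA : A.IsHermitian) :
    OrthonormalBasis (Fin d) ℝ (EuclideanSpace ℝ (Fin d)) :=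
  hA.eigenvectorBasis.reindex (Fin.revPerm.trans (Tuple.sort hA.eigenvalues)).symm

lemma eigBasisDesc_apply (hA : A.IsHermitian) (j : Fin d) :
    eigBasisDesc hA j = hA.eigenvectorBasis (Tuple.sort hA.eigenvalues j.rev) := by
  simp [eigBasisDesc, OrthonormalBasis.reindex_apply]

lemma toEuclideanCLM_eigBasisDesc (hA : A.IsHermitian) (j : Fin d) :
    Matrix.toEuclideanCLM (𝕜 := ℝ) A (eigBasisDesc hA j) = eigDesc hA j • eigBasisDesc hA j := by
  have h := hA.mulVec_eigenvectorBasis (Tuple.sort hA.eigenvalues j.rev)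
  apply (WithLp.equiv 2 _).injective
  rw [WithLp.equiv_apply, WithLp.equiv_apply, Matrix.ofLp_toEuclideanCLM]
  ext x
  have := congrFun h x
  simpa [eigBasisDesc_apply, eigDesc] using this

lemma antitone_eigDesc (hA : A.IsHermitian) : Antitone (eigDesc hA) := by
  intro j k hjk
  have h := Tuple.monotone_sort hA.eigenvalues (Fin.rev_le_rev.mpr hjk)
  simpa [eigDesc, Function.comp] using h

lemma norm_sq_eq_sum_repr (β : OrthonormalBasis (Fin d) ℝ (EuclideanSpace ℝ (Fin d)))
    (v : EuclideanSpace ℝ (Fin d)) : ‖v‖^2 = ∑ j, (β.repr v j)^2 := by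
  have h : ‖v‖ = ‖β.repr v‖ := (β.repr.norm_map v).symm
  rw [h, EuclideanSpace.norm_eq, Real.sq_sqrt (by positivity)]
  simp [sq_abs]

lemma quadF_eq_sum (hA : A.IsHermitian) (v : EuclideanSpace ℝ (Fin d)) :
    quadF A v = ∑ j, eigDesc hA j * ((eigBasisDesc hA).repr v j)^2 := by
  set β := eigBasisDesc hA with hβ
  have hv : ∑ j, β.repr v j • β j = v := β.sum_repr v
  calc quadF A v
      = inner ℝ (Matrix.toEuclideanCLM (𝕜 := ℝ) A (∑ j, β.repr v j • β j)) v := by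
        rw [hv]; rfl
    _ = ∑ j, eigDesc hA j * (β.repr v j * inner ℝ (β j) v) := by
        rw [map_sum, sum_inner]
        refine Finset.sum_congr rfl fun j _ => ?_
        rw [_root_.map_smul, hβ, toEuclideanCLM_eigBasisDesc, smul_smul, real_inner_smul_left]
        ring
    _ = _ := by
        refine Finset.sum_congr rfl fun j _ => ?_
        rw [← β.repr_apply_apply]
        ring

lemma le_quadF_of_mem_span (hA : A.IsHermitian) {s : Finset (Fin d)} {r : ℝ}
    (hr : ∀ j ∈ s, r ≤ eigDesc hA j) {v : EuclideanSpace ℝ (Fin d)}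
    (hv : v ∈ Submodule.span ℝ (eigBasisDesc hA '' ↑s)) : r * ‖v‖^2 ≤ quadF A v := by
  set β := eigBasisDesc hA with hβ
  have hsupp : ∀ j, j ∉ s → β.repr v j = 0 := by
    have h2 : v ∈ Submodule.span ℝ (β.toBasis '' ↑s) := by
      simpa using hv
    have h3 := (β.toBasis.mem_span_image (s := ↑s) (m := v)).mp h2
    intro j hj
    have : j ∉ (β.toBasis.repr v).support := fun hc => hj (by exact_mod_cast h3 hc)
    simpa [OrthonormalBasis.coe_toBasis_repr_apply] using Finsupp.notMem_support_iff.mp this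
  rw [quadF_eq_sum hA, norm_sq_eq_sum_repr β, Finset.mul_sum]
  apply Finset.sum_le_sum
  intro j _
  by_cases hj : j ∈ s
  · exact mul_le_mul_of_nonneg_right (hr j hj) (sq_nonneg _)
  · simp [← hβ, hsupp j hj]

lemma quadF_le_of_mem_span (hA : A.IsHermitian) {s : Finset (Fin d)} {r : ℝ}
    (hr : ∀ j ∈ s, eigDesc hA j ≤ r) {v : EuclideanSpace ℝ (Fin d)}
    (hv : v ∈ Submodule.span ℝ (eigBasisDesc hA '' ↑s)) : quadF A v ≤ r * ‖v‖^2 := by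
  set β := eigBasisDesc hA with hβ
  have hsupp : ∀ j, j ∉ s → β.repr v j = 0 := by
    have h2 : v ∈ Submodule.span ℝ (β.toBasis '' ↑s) := by
      simpa using hv
    have h3 := (β.toBasis.mem_span_image (s := ↑s) (m := v)).mp h2
    intro j hj
    have : j ∉ (β.toBasis.repr v).support := fun hc => hj (by exact_mod_cast h3 hc)
    simpa [OrthonormalBasis.coe_toBasis_repr_apply] using Finsupp.notMem_support_iff.mp this
  rw [quadF_eq_sum hA, norm_sq_eq_sum_repr β, Finset.mul_sum]
  apply Finset.sum_le_sum
  intro j _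
  by_cases hj : j ∈ s
  · exact mul_le_mul_of_nonneg_right (hr j hj) (sq_nonneg _)
  · simp [← hβ, hsupp j hj]

lemma finrank_span_eigBasis (hA : A.IsHermitian) (s : Finset (Fin d)) :
    Module.finrank ℝ (Submodule.span ℝ (eigBasisDesc hA '' ↑s)) = s.card := by
  classical
  set β := eigBasisDesc hA with hβ
  have hli : LinearIndependent ℝ (fun x : (β '' ↑s : Set _) => (x : EuclideanSpace ℝ (Fin d))) :=
    LinearIndepOn.id_image (β.orthonormal.linearIndependent.comp ((↑) : (↑s : Set (Fin d)) → Fin d)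
      Subtype.val_injective)
  rw [show (⇑β '' ↑s : Set _) = ↑(s.image β) from (Finset.coe_image).symm] at hli ⊢
  rw [finrank_span_finset_eq_card hli,
    Finset.card_image_of_injective _ β.orthonormal.linearIndependent.injective]

lemma exists_ne_zero_mem_inf {V W : Submodule ℝ (EuclideanSpace ℝ (Fin d))}
    (h : d < Module.finrank ℝ V + Module.finrank ℝ W) :
    ∃ v, v ≠ 0 ∧ v ∈ V ∧ v ∈ W := by
  have hd : Module.finrank ℝ (EuclideanSpace ℝ (Fin d)) = d := by simp
  have h1 := Submodule.finrank_sup_add_finrank_inf_eq V W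
  have h2 : Module.finrank ℝ ↥(V ⊔ W) ≤ Module.finrank ℝ (EuclideanSpace ℝ (Fin d)) :=
    Submodule.finrank_le _
  rw [hd] at h2
  have h3 : 0 < Module.finrank ℝ ↥(V ⊓ W) := by omega
  have hne : V ⊓ W ≠ ⊥ := by
    intro hb
    rw [hb, finrank_bot] at h3
    exact lt_irrefl 0 h3
  obtain ⟨v, hv, hv0⟩ := Submodule.exists_mem_ne_zero_of_ne_bot hne
  exact ⟨v, hv0, (Submodule.mem_inf.mp hv).1, (Submodule.mem_inf.mp hv).2⟩

lemma eigDesc_le_of_subspace (hA : A.IsHermitian) (i : Fin d) (c : ℝ)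
    (W : Submodule ℝ (EuclideanSpace ℝ (Fin d))) (hW : d ≤ Module.finrank ℝ W + i)
    (hq : ∀ v ∈ W, quadF A v ≤ c * ‖v‖^2) : eigDesc hA i ≤ c := by
  have hV : Module.finrank ℝ (Submodule.span ℝ (eigBasisDesc hA '' ↑(Finset.Iic i)))
      = i + 1 := by rw [finrank_span_eigBasis, Fin.card_Iic]
  obtain ⟨v, hv0, hvV, hvW⟩ := exists_ne_zero_mem_inf (V := Submodule.span ℝ
    (eigBasisDesc hA '' ↑(Finset.Iic i))) (W := W) (by omega)
  have h1 : eigDesc hA i * ‖v‖^2 ≤ quadF A v :=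
    le_quadF_of_mem_span hA (fun j hj => antitone_eigDesc hA (Finset.mem_Iic.mp hj)) hvV
  have hv2 : (0:ℝ) < ‖v‖^2 := by have := norm_pos_iff.mpr hv0; positivity
  exact (mul_le_mul_iff_of_pos_right hv2).mp (h1.trans (hq v hvW))

lemma le_eigDesc_of_subspace (hA : A.IsHermitian) (i : Fin d) (c : ℝ)
    (V : Submodule ℝ (EuclideanSpace ℝ (Fin d))) (hV : i + 1 ≤ Module.finrank ℝ V)
    (hq : ∀ v ∈ V, c * ‖v‖^2 ≤ quadF A v) : c ≤ eigDesc hA i := by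
  have hW : Module.finrank ℝ (Submodule.span ℝ (eigBasisDesc hA '' ↑(Finset.Ici i)))
      = d - i := by rw [finrank_span_eigBasis, Fin.card_Ici]
  have hid : (i : ℕ) < d := i.isLt
  obtain ⟨v, hv0, hvV, hvW⟩ := exists_ne_zero_mem_inf (V := V) (W := Submodule.span ℝ
    (eigBasisDesc hA '' ↑(Finset.Ici i))) (by omega)
  have h1 : quadF A v ≤ eigDesc hA i * ‖v‖^2 :=
    quadF_le_of_mem_span hA (fun j hj => antitone_eigDesc hA (Finset.mem_Ici.mp hj)) hvW
  have hv2 : (0:ℝ) < ‖v‖^2 := by have := norm_pos_iff.mpr hv0; positivity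
  exact (mul_le_mul_iff_of_pos_right hv2).mp ((hq v hvV).trans h1)

lemma inner_toEuclideanCLM_symm {R : Matrix (Fin d) (Fin d) ℝ} (hR : R.IsHermitian)
    (x y : EuclideanSpace ℝ (Fin d)) :
    (inner ℝ (Matrix.toEuclideanCLM (𝕜 := ℝ) R x) y : ℝ)
      = inner ℝ x (Matrix.toEuclideanCLM (𝕜 := ℝ) R y) := by
  have hsym := (Matrix.isHermitian_iff_isSymmetric.mp hR) x y
  have hc : ∀ z, Matrix.toEuclideanCLM (𝕜 := ℝ) R z = Matrix.toEuclideanLin R z := fun z => by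
    rw [← Matrix.coe_toEuclideanCLM_eq_toEuclideanLin]; rfl
  rw [hc, hc]
  exact hsym

lemma quadF_conj {R M : Matrix (Fin d) (Fin d) ℝ} (hR : R.IsHermitian)
    (v : EuclideanSpace ℝ (Fin d)) :
    quadF (R * M * R) v = inner ℝ (Matrix.toEuclideanCLM (𝕜 := ℝ) M
      (Matrix.toEuclideanCLM (𝕜 := ℝ) R v)) (Matrix.toEuclideanCLM (𝕜 := ℝ) R v) := by
  unfold quadF
  rw [_root_.map_mul, _root_.map_mul]
  simp only [ContinuousLinearMap.mul_apply]
  rw [inner_toEuclideanCLM_symm hR]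

lemma norm_sq_sqrt_eq_quadF {S : Matrix (Fin d) (Fin d) ℝ} (hS : S.PosSemidef)
    (v : EuclideanSpace ℝ (Fin d)) :
    ‖Matrix.toEuclideanCLM (𝕜 := ℝ) hS.sqrt v‖^2 = quadF S v := by
  have hR : hS.sqrt.IsHermitian := psd_sqrt_isHermitian hS
  rw [← real_inner_self_eq_norm_sq, ← inner_toEuclideanCLM_symm hR]
  unfold quadF
  congr 1
  rw [← ContinuousLinearMap.mul_apply, ← _root_.map_mul, psd_sqrt_mul_self hS]

lemma quadF_split (M : Matrix (Fin d) (Fin d) ℝ) (w : EuclideanSpace ℝ (Fin d)) :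
    (inner ℝ (Matrix.toEuclideanCLM (𝕜 := ℝ) M w) w : ℝ)
      = ‖w‖^2 + inner ℝ (Matrix.toEuclideanCLM (𝕜 := ℝ) (M - 1) w) w := by
  have hM : M = 1 + (M - 1) := by abel
  nth_rewrite 1 [hM]
  rw [map_add, _root_.map_one]
  simp only [ContinuousLinearMap.add_apply, ContinuousLinearMap.one_apply]
  rw [inner_add_left, real_inner_self_eq_norm_sq]

lemma abs_inner_CLM_le (E : Matrix (Fin d) (Fin d) ℝ) (w : EuclideanSpace ℝ (Fin d)) :
    |(inner ℝ (Matrix.toEuclideanCLM (𝕜 := ℝ) E w) w : ℝ)| ≤ specNorm E * ‖w‖^2 := by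
  calc |(inner ℝ (Matrix.toEuclideanCLM (𝕜 := ℝ) E w) w : ℝ)|
      ≤ ‖Matrix.toEuclideanCLM (𝕜 := ℝ) E w‖ * ‖w‖ := abs_real_inner_le_norm _ _
    _ ≤ (‖Matrix.toEuclideanCLM (𝕜 := ℝ) E‖ * ‖w‖) * ‖w‖ := by
        gcongr
        exact (Matrix.toEuclideanCLM (𝕜 := ℝ) E).le_opNorm w
    _ = specNorm E * ‖w‖^2 := by rw [specNorm]; ring

lemma gram_smul_posSemidef {n d : ℕ} (X : Matrix (Fin n) (Fin d) ℝ) {c : ℝ} (hc : 0 ≤ c) :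
    (c • (Xᵀ * X)).PosSemidef := by
  have h0 := Matrix.posSemidef_conjTranspose_mul_self X
  rw [Matrix.conjTranspose_eq_transpose_of_trivial] at h0
  refine ⟨real_gram_isHermitian c X, fun x => ?_⟩
  have h1 := (h0.smul hc).2 x
  exact h1

/-- Low-dimensional relative deviation bound: if `X = Z Σ^{1/2}` with `Σ ⪰ 0` and `d ≤ n`,
then for every `i`, `|λ_i((1/n) XᵀX) − λ_i(Σ)| ≤ λ_i(Σ) ‖(1/n) ZᵀZ − I_d‖₂`. -/
theorem relative_deviation_low_dim {n d : ℕ} (hdn : d ≤ n)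
    (X Z : Matrix (Fin n) (Fin d) ℝ) {S : Matrix (Fin d) (Fin d) ℝ} (hS : S.PosSemidef)
    (hX : X = Z * hS.sqrt) (i : Fin d) :
    |eigDesc (real_gram_isHermitian ((1 : ℝ) / n) X) i - eigDesc hS.1 i| ≤
      eigDesc hS.1 i * specNorm (((1 : ℝ) / n) • (Zᵀ * Z) - 1) := by
  classical
  have hR : (hS.sqrt).IsHermitian := psd_sqrt_isHermitian hS
  set R := hS.sqrt with hRdef
  set M := ((1:ℝ)/n) • (Zᵀ * Z) with hMdef
  set t := specNorm (M - 1) with htdef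
  have ht0 : 0 ≤ t := norm_nonneg _
  set μ := eigDesc hS.1 i with hμdef
  have hμ0 : 0 ≤ μ := by rw [hμdef]; unfold eigDesc; exact hS.eigenvalues_nonneg _
  have hmat : ((1:ℝ)/n) • (Xᵀ * X) = R * M * R := by
    subst hX
    have hRt : Rᵀ = R := by
      rw [← Matrix.conjTranspose_eq_transpose_of_trivial]; exact hR
    rw [Matrix.transpose_mul, hRt, hMdef]
    simp [Matrix.mul_smul, Matrix.smul_mul, Matrix.mul_assoc]
  have hbound : ∀ v : EuclideanSpace ℝ (Fin d),
      |quadF (((1:ℝ)/n) • (Xᵀ * X)) v - quadF S v| ≤ t * quadF S v := by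
    intro v
    have hkey : quadF (((1:ℝ)/n) • (Xᵀ * X)) v = quadF S v +
        inner ℝ (Matrix.toEuclideanCLM (𝕜 := ℝ) (M - 1) (Matrix.toEuclideanCLM (𝕜 := ℝ) R v))
          (Matrix.toEuclideanCLM (𝕜 := ℝ) R v) := by
      rw [hmat, quadF_conj hR, quadF_split, norm_sq_sqrt_eq_quadF hS]
    rw [hkey]
    have h1 := abs_inner_CLM_le (M - 1) (Matrix.toEuclideanCLM (𝕜 := ℝ) R v)
    rw [norm_sq_sqrt_eq_quadF hS] at h1
    simpa using h1
  have hup : eigDesc (real_gram_isHermitian ((1 : ℝ) / n) X) i ≤ μ * (1 + t) := by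
    apply eigDesc_le_of_subspace _ i _
      (Submodule.span ℝ (eigBasisDesc hS.1 '' ↑(Finset.Ici i)))
    · rw [finrank_span_eigBasis, Fin.card_Ici]
      have := i.isLt; omega
    · intro v hv
      have h2 : quadF S v ≤ μ * ‖v‖^2 := quadF_le_of_mem_span hS.1
        (fun j hj => antitone_eigDesc hS.1 (Finset.mem_Ici.mp hj)) hv
      have h3 := (abs_le.mp (hbound v)).2
      nlinarith [mul_le_mul_of_nonneg_left h2 (by linarith : (0:ℝ) ≤ 1 + t)]
  have hPSD : (((1:ℝ)/n) • (Xᵀ * X)).PosSemidef := gram_smul_posSemidef X (by positivity)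
  have hA0 : 0 ≤ eigDesc (real_gram_isHermitian ((1 : ℝ) / n) X) i := by
    unfold eigDesc; exact hPSD.eigenvalues_nonneg _
  have hlow : μ * (1 - t) ≤ eigDesc (real_gram_isHermitian ((1 : ℝ) / n) X) i := by
    by_cases htl : t ≤ 1
    · apply le_eigDesc_of_subspace _ i _
        (Submodule.span ℝ (eigBasisDesc hS.1 '' ↑(Finset.Iic i)))
      · rw [finrank_span_eigBasis, Fin.card_Iic]
      · intro v hv
        have h2 : μ * ‖v‖^2 ≤ quadF S v := le_quadF_of_mem_span hS.1
          (fun j hj => antitone_eigDesc hS.1 (Finset.mem_Iic.mp hj)) hv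
        have h3 := (abs_le.mp (hbound v)).1
        nlinarith [mul_le_mul_of_nonneg_left h2 (by linarith : (0:ℝ) ≤ 1 - t)]
    · nlinarith
  rw [abs_le]
  constructor <;> nlinarith
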